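/- Let φ₁, …, φ_n and g be Boolean functions on assignments over a finite variable set V, and let f = φ₁ ∨ ⋯ ∨ φ_n be their pointwise disjunction. If for every subset Ψ ⊆ {1, …, n} the XOR ⊕_{i ∈ Ψ} φ_i (the empty XOR being the constant false) is statistically independent of g, then f is statistically independent of g. -/

import Mathlib

namespace Danira

instance : Std.Commutative xor := ⟨Bool.xor_comm⟩
instance : Std.Associative xor := ⟨Bool.xor_assoc⟩
instance : Std.Commutative or := ⟨Bool.or_comm⟩
instance : Std.Associative or := ⟨Bool.or_assoc⟩

variable {V : Type*} [Fintype V] [DecidableEq V]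

/-- Number of satisfying assignments of a Boolean function. -/
def weight (f : (V → Bool) → Bool) : ℕ :=
  (Finset.univ.filter fun α : V → Bool => f α = true).card

/-- A Boolean function is balanced if exactly half of all assignments satisfy it. -/
def Balanced (f : (V → Bool) → Bool) : Prop :=
  weight f = 2 ^ (Fintype.card V - 1)

/-- Statistical independence of two Boolean functions. -/
def StatIndep (f g : (V → Bool) → Bool) : Prop :=
  weight (fun α => f α && g α) * weight (fun α => !f α)
    = weight (fun α => !f α && g α) * weight f

/-- `f` functionally depends on variable `x`. -/
def FunDep (f : (V → Bool) → Bool) (x : V) : Prop :=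
  ∃ α β : V → Bool, (∀ v, v ≠ x → α v = β v) ∧ f α ≠ f β

instance (f : (V → Bool) → Bool) (x : V) : Decidable (FunDep f x) := by
  unfold FunDep; infer_instance

/-- Partial evaluation `f[b/x]`. -/
def subst (f : (V → Bool) → Bool) (x : V) (b : Bool) : (V → Bool) → Bool :=
  fun α => f (Function.update α x b)

/-- Variables that can be linearly factored out of `f`. -/
def Fact (f : (V → Bool) → Bool) : Finset V :=
  Finset.univ.filter fun x => ∀ α, xor (subst f x false α) (subst f x true α) = true

/-- Essential variables of `f`. -/
def Ess (f : (V → Bool) → Bool) : Finset V :=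
  Finset.univ.filter fun x => FunDep f x


lemma weight_eq_sum (f : (V → Bool) → Bool) :
    weight f = ∑ α : V → Bool, (if f α = true then 1 else 0) := by
  rw [weight, Finset.card_filter]

lemma weight_add_weight_not (f : (V → Bool) → Bool) :
    weight f + weight (fun α => !f α) = 2 ^ Fintype.card V := by
  rw [weight_eq_sum, weight_eq_sum, ← Finset.sum_add_distrib]
  have h1 : ∀ α ∈ (Finset.univ : Finset (V → Bool)),
      ((if f α = true then 1 else 0) + (if (!f α) = true then 1 else 0) : ℕ) = 1 := by
    intro α _; cases f α <;> simp
  rw [Finset.sum_congr rfl h1, Finset.sum_const, Finset.card_univ, smul_eq_mul,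
    Nat.mul_one]
  simp

lemma weight_and_add (f g : (V → Bool) → Bool) :
    weight (fun α => f α && g α) + weight (fun α => !f α && g α) = weight g := by
  rw [weight_eq_sum, weight_eq_sum, weight_eq_sum, ← Finset.sum_add_distrib]
  refine Finset.sum_congr rfl fun α _ => ?_
  cases f α <;> cases g α <;> simp

lemma statIndep_iff (f g : (V → Bool) → Bool) :
    StatIndep f g ↔
      2 ^ Fintype.card V * weight (fun α => f α && g α) = weight g * weight f := by
  unfold StatIndep
  constructor
  · intro h
    calc 2 ^ Fintype.card V * weight (fun α => f α && g α)
        = weight (fun α => f α && g α) * weight f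
          + weight (fun α => f α && g α) * weight (fun α => !f α) := by
          rw [← Nat.mul_add, weight_add_weight_not f, Nat.mul_comm]
      _ = weight (fun α => f α && g α) * weight f
          + weight (fun α => !f α && g α) * weight f := by rw [h]
      _ = weight g * weight f := by
          rw [← Nat.add_mul, weight_and_add f g]
  · intro h
    have key : weight (fun α => f α && g α) * weight (fun α => !f α)
        + weight (fun α => f α && g α) * weight f
        = weight (fun α => !f α && g α) * weight f
        + weight (fun α => f α && g α) * weight f := by
      calc weight (fun α => f α && g α) * weight (fun α => !f α)
          + weight (fun α => f α && g α) * weight f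
          = weight (fun α => f α && g α) * 2 ^ Fintype.card V := by
            rw [← Nat.mul_add, Nat.add_comm (weight _), weight_add_weight_not f]
        _ = weight g * weight f := by rw [Nat.mul_comm, h]
        _ = (weight (fun α => !f α && g α) + weight (fun α => f α && g α)) * weight f := by
            rw [Nat.add_comm, weight_and_add f g]
        _ = _ := by rw [Nat.add_mul]
    exact Nat.add_right_cancel key

lemma core {ι : Type*} [DecidableEq ι] (s : Finset ι) (β : ι → Bool) :
    2 ^ s.card * (if s.fold or false β = true then 1 else 0) =
      2 * ∑ Ψ ∈ s.powerset, (if Ψ.fold xor false β = true then 1 else 0) := by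
  classical
  induction s using Finset.induction with
  | empty => simp [Finset.filter_singleton]
  | @insert a s ha ih =>
    rw [Finset.powerset_insert, Finset.sum_union, Finset.sum_image]
    · rw [Finset.fold_insert ha, Finset.card_insert_of_notMem ha]
      have hx : ∀ Ψ ∈ s.powerset,
          ((if (insert a Ψ).fold xor false β = true then 1 else 0) : ℕ)
          = (if xor (β a) (Ψ.fold xor false β) = true then 1 else 0) := by
        intro Ψ hΨ
        have haΨ : a ∉ Ψ := fun hmem => ha (Finset.mem_powerset.mp hΨ hmem)
        rw [Finset.fold_insert haΨ]
      rw [Finset.sum_congr rfl hx]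
      cases hba : β a with
      | false =>
        simp only [Bool.false_or, Bool.false_xor]
        rw [pow_succ, Nat.mul_comm (2 ^ s.card) 2, Nat.mul_assoc, ih]
        ring
      | true =>
        simp only [Bool.true_or, Bool.true_xor, if_true]
        have h1 : ∀ Ψ ∈ s.powerset,
            ((if Ψ.fold xor false β = true then 1 else 0)
              + (if (!(Ψ.fold xor false β)) = true then 1 else 0) : ℕ) = 1 := by
          intro Ψ _; cases Ψ.fold xor false β <;> simp
        rw [← Finset.sum_add_distrib, Finset.sum_congr rfl h1, Finset.sum_const,
          Finset.card_powerset, smul_eq_mul, Nat.mul_one, pow_succ]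
        ring
    · intro x hx y hy hxy
      have hax : a ∉ x := fun hm => ha (Finset.mem_powerset.mp hx hm)
      have hay : a ∉ y := fun hm => ha (Finset.mem_powerset.mp hy hm)
      have := congrArg (Finset.erase · a) hxy
      simpa [Finset.erase_insert hax, Finset.erase_insert hay] using this
    · rw [Finset.disjoint_right]
      intro Ψ hΨ
      simp only [Finset.mem_image] at hΨ
      obtain ⟨x, _, rfl⟩ := hΨ
      intro hmem
      exact ha (Finset.mem_powerset.mp hmem (Finset.mem_insert_self a x))

lemma key (n : ℕ) (φ : Fin n → (V → Bool) → Bool) (p : (V → Bool) → Bool) :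
    2 ^ n * weight (fun α => Finset.univ.fold or false (fun i => φ i α) && p α)
      = 2 * ∑ Ψ : Finset (Fin n),
          weight (fun α => Ψ.fold xor false (fun i => φ i α) && p α) := by
  simp only [weight_eq_sum]
  calc 2 ^ n * ∑ α : V → Bool,
      (if (Finset.univ.fold or false (fun i => φ i α) && p α) = true then 1 else 0)
      = ∑ α : V → Bool, 2 ^ n *
        (if (Finset.univ.fold or false (fun i => φ i α) && p α) = true then 1 else 0) := by
        rw [Finset.mul_sum]
    _ = ∑ α : V → Bool, 2 * ∑ Ψ : Finset (Fin n),
        (if (Ψ.fold xor false (fun i => φ i α) && p α) = true then 1 else 0) := by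
        refine Finset.sum_congr rfl fun α _ => ?_
        have hc := core Finset.univ (fun i => φ i α)
        rw [Finset.card_univ, Fintype.card_fin, Finset.powerset_univ] at hc
        cases hp : p α with
        | false => simp
        | true => simpa using hc
    _ = 2 * ∑ α : V → Bool, ∑ Ψ : Finset (Fin n),
        (if (Ψ.fold xor false (fun i => φ i α) && p α) = true then 1 else 0) := by
        rw [Finset.mul_sum]
    _ = _ := by rw [Finset.sum_comm]

theorem stmt6 (n : ℕ) (φ : Fin n → (V → Bool) → Bool) (g : (V → Bool) → Bool)
    (h : ∀ Ψ : Finset (Fin n),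
      StatIndep (fun α => Ψ.fold xor false (fun i => φ i α)) g) :
    StatIndep (fun α => Finset.univ.fold or false (fun i => φ i α)) g := by

  rw [statIndep_iff]
  simp only [statIndep_iff] at h
  have hmain : 2 ^ n * (2 ^ Fintype.card V *
      weight (fun α => Finset.univ.fold or false (fun i => φ i α) && g α))
    = 2 ^ n * (weight g *
      weight (fun α => Finset.univ.fold or false (fun i => φ i α))) := by
    calc 2 ^ n * (2 ^ Fintype.card V *
        weight (fun α => Finset.univ.fold or false (fun i => φ i α) && g α))
        = 2 ^ Fintype.card V * (2 ^ n *
          weight (fun α => Finset.univ.fold or false (fun i => φ i α) && g α)) := by ring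
      _ = 2 ^ Fintype.card V * (2 * ∑ Ψ : Finset (Fin n),
          weight (fun α => Ψ.fold xor false (fun i => φ i α) && g α)) := by
          rw [key]
      _ = 2 * ∑ Ψ : Finset (Fin n), 2 ^ Fintype.card V *
          weight (fun α => Ψ.fold xor false (fun i => φ i α) && g α) := by
          rw [Finset.mul_sum, Finset.mul_sum, Finset.mul_sum]
          exact Finset.sum_congr rfl fun Ψ _ => by ring
      _ = 2 * ∑ Ψ : Finset (Fin n), weight g *
          weight (fun α => Ψ.fold xor false (fun i => φ i α)) := by
          exact congrArg _ (Finset.sum_congr rfl fun Ψ _ => h Ψ)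
      _ = weight g * (2 * ∑ Ψ : Finset (Fin n),
          weight (fun α => Ψ.fold xor false (fun i => φ i α))) := by
          rw [Finset.mul_sum, Finset.mul_sum, Finset.mul_sum]
          exact Finset.sum_congr rfl fun Ψ _ => by ring
      _ = weight g * (2 ^ n *
          weight (fun α => Finset.univ.fold or false (fun i => φ i α))) := by
          have hk := key n φ (fun _ => true)
          simp only [Bool.and_true] at hk
          rw [hk]
      _ = _ := by ring
  exact Nat.eq_of_mul_eq_mul_left (Nat.pow_pos (by norm_num)) hmain


end Danira
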